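/- Let F be a field of characteristic different from 2 and let c ∈ F satisfy conditions (3.2), (3.3) and (3.6). Then no element of R(c) is a root of g_1(x,c) = x² + c − 2x or of g_3(x,c) = x² + c − 2xc. -/

import Mathlib

noncomputable section

/-- The set `R(c) = {c, c+1, c-1, c/(1-c), c/(1+c), c(2-c), c²/(2c-1)}`. -/
def Rset {F : Type*} [Field F] (c : F) : Set F :=
  {c, c + 1, c - 1, c / (1 - c), c / (1 + c), c * (2 - c), c ^ 2 / (2 * c - 1)}

/-- Lemma 3.5: under conditions (3.2), (3.3) and (3.6), no element of `R(c)` is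
a root of `g₁(x,c) = x² + c - 2x` or of `g₃(x,c) = x² + c - 2xc`. -/
theorem rset_no_root_g (F : Type*) [Field F] (h2 : ringChar F ≠ 2) (c : F)
    (h32 : c ≠ -1 ∧ c ≠ 0 ∧ c ≠ 1 ∧ c ≠ 1 / 2 ∧ c ≠ 2)
    (h33 : c ^ 2 + c + 1 ≠ 0 ∧ c ^ 2 + c - 1 ≠ 0 ∧ c ^ 2 - c + 1 ≠ 0 ∧
      c ^ 2 - c - 1 ≠ 0)
    (h36 : c ^ 2 - 3 * c + 3 ≠ 0 ∧ 3 * c ^ 2 - 3 * c + 1 ≠ 0) :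
    ∀ x ∈ Rset c, x ^ 2 + c - 2 * x ≠ 0 ∧ x ^ 2 + c - 2 * x * c ≠ 0 := by
  obtain ⟨hm1, h0, h1, hhalf, hh2⟩ := h32
  obtain ⟨_, hpp, _, hmm⟩ := h33
  obtain ⟨h36a, h36b⟩ := h36
  have h20 : (2 : F) ≠ 0 := Ring.two_ne_zero h2
  have h1c : (1 : F) - c ≠ 0 := sub_ne_zero.mpr (Ne.symm h1)
  have hc1 : c - 1 ≠ 0 := sub_ne_zero.mpr h1
  have hpc : (1 : F) + c ≠ 0 := by
    intro h; exact hm1 (by linear_combination h)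
  have h2c1 : 2 * c - 1 ≠ 0 := by
    intro h
    apply hhalf
    field_simp
    linear_combination h
  intro x hx
  simp only [Rset, Set.mem_insert_iff, Set.mem_singleton_iff] at hx
  rcases hx with h | h | h | h | h | h | h <;> rw [h]
  · constructor
    · have : c ^ 2 + c - 2 * c = c * (c - 1) := by ring
      rw [this]; exact mul_ne_zero h0 hc1
    · have : c ^ 2 + c - 2 * c * c = -(c * (c - 1)) := by ring
      rw [this]; exact neg_ne_zero.mpr (mul_ne_zero h0 hc1)
  · constructor
    · have : (c + 1) ^ 2 + c - 2 * (c + 1) = c ^ 2 + c - 1 := by ring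
      rw [this]; exact hpp
    · have : (c + 1) ^ 2 + c - 2 * (c + 1) * c = -(c ^ 2 - c - 1) := by ring
      rw [this]; exact neg_ne_zero.mpr hmm
  · constructor
    · have : (c - 1) ^ 2 + c - 2 * (c - 1) = c ^ 2 - 3 * c + 3 := by ring
      rw [this]; exact h36a
    · have : (c - 1) ^ 2 + c - 2 * (c - 1) * c = -(c ^ 2 - c - 1) := by ring
      rw [this]; exact neg_ne_zero.mpr hmm
  · constructor
    · have : (c / (1 - c)) ^ 2 + c - 2 * (c / (1 - c)) =
        c * (c ^ 2 + c - 1) / (1 - c) ^ 2 := by field_simp; ring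
      rw [this]
      exact div_ne_zero (mul_ne_zero h0 hpp) (pow_ne_zero _ h1c)
    · have : (c / (1 - c)) ^ 2 + c - 2 * (c / (1 - c)) * c =
        c * (3 * c ^ 2 - 3 * c + 1) / (1 - c) ^ 2 := by field_simp; ring
      rw [this]
      exact div_ne_zero (mul_ne_zero h0 h36b) (pow_ne_zero _ h1c)
  · constructor
    · have : (c / (1 + c)) ^ 2 + c - 2 * (c / (1 + c)) =
        c * (c ^ 2 + c - 1) / (1 + c) ^ 2 := by field_simp; ring
      rw [this]
      exact div_ne_zero (mul_ne_zero h0 hpp) (pow_ne_zero _ hpc)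
    · have : (c / (1 + c)) ^ 2 + c - 2 * (c / (1 + c)) * c =
        -(c * (c ^ 2 - c - 1)) / (1 + c) ^ 2 := by field_simp; ring
      rw [this]
      exact div_ne_zero (neg_ne_zero.mpr (mul_ne_zero h0 hmm)) (pow_ne_zero _ hpc)
  · constructor
    · have : (c * (2 - c)) ^ 2 + c - 2 * (c * (2 - c)) =
        c * ((c - 1) * (c ^ 2 - 3 * c + 3)) := by ring
      rw [this]
      exact mul_ne_zero h0 (mul_ne_zero hc1 h36a)
    · have : (c * (2 - c)) ^ 2 + c - 2 * (c * (2 - c)) * c =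
        c * ((c - 1) * (c ^ 2 - c - 1)) := by ring
      rw [this]
      exact mul_ne_zero h0 (mul_ne_zero hc1 hmm)
  · constructor
    · have : (c ^ 2 / (2 * c - 1)) ^ 2 + c - 2 * (c ^ 2 / (2 * c - 1)) =
        c * ((c - 1) * (c ^ 2 + c - 1)) / (2 * c - 1) ^ 2 := by
          rw [eq_div_iff (pow_ne_zero 2 h2c1)]
          have hy : c ^ 2 / (2 * c - 1) * (2 * c - 1) = c ^ 2 := div_mul_cancel₀ _ h2c1
          linear_combination (c ^ 2 / (2 * c - 1) * (2 * c - 1) + c ^ 2 - 2 * (2 * c - 1)) * hy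
      rw [this]
      exact div_ne_zero (mul_ne_zero h0 (mul_ne_zero hc1 hpp)) (pow_ne_zero _ h2c1)
    · have : (c ^ 2 / (2 * c - 1)) ^ 2 + c - 2 * (c ^ 2 / (2 * c - 1)) * c =
        -(c * ((c - 1) * (3 * c ^ 2 - 3 * c + 1))) / (2 * c - 1) ^ 2 := by
          rw [eq_div_iff (pow_ne_zero 2 h2c1)]
          have hy : c ^ 2 / (2 * c - 1) * (2 * c - 1) = c ^ 2 := div_mul_cancel₀ _ h2c1
          linear_combination (c ^ 2 / (2 * c - 1) * (2 * c - 1) + c ^ 2 - 2 * c * (2 * c - 1)) * hy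
      rw [this]
      exact div_ne_zero (neg_ne_zero.mpr (mul_ne_zero h0 (mul_ne_zero hc1 h36b)))
        (pow_ne_zero _ h2c1)
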